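/- There exists a constant C > 0 such that for all t ≥ 0 and all x ∈ ℝ³, ∫₀ᵗ ∫_{ℝ³} (1 + t − τ)^{−2} (1 + |x−y|²/(1+t−τ))^{−2} (1 + τ)^{−3} (1 + |y|²/(1+τ))^{−3} dy dτ ≤ C (1+t)^{−2} (1 + |x|²/(1+t))^{−3/2}. -/

import Mathlib

open MeasureTheory Real Set Filter

noncomputable section K1aux

local notation "E3" => EuclideanSpace ℝ (Fin 3)

private lemma integ_std' {p : ℕ} (hp : 2 ≤ p) :
    Integrable (fun z : E3 => (((1:ℝ)+‖z‖^2)^p)⁻¹) := by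
  have hcast : (2:ℝ) ≤ (p:ℝ) := by exact_mod_cast hp
  have h : Integrable (fun z : E3 => ((1:ℝ) + ‖z‖^2) ^ (-(2*(p:ℝ))/2)) :=
    integrable_rpow_neg_one_add_norm_sq (by
      rw [finrank_euclideanSpace_fin]; push_cast; nlinarith)
  refine h.congr (Eventually.of_forall fun z => ?_)
  have h1 : (0:ℝ) < 1 + ‖z‖^2 := by positivity
  simp only [show (-(2*(p:ℝ))/2) = -(p:ℝ) by ring, rpow_neg h1.le, rpow_natCast]

private lemma integ_shifted' {p : ℕ} (hp : 2 ≤ p) {v : ℝ} (hv : 1 ≤ v) :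
    Integrable (fun z : E3 => ((v+‖z‖^2)^p)⁻¹) := by
  refine (integ_std' hp).mono' ?_ (Eventually.of_forall fun z => ?_)
  · apply Continuous.aestronglyMeasurable
    fun_prop (disch := intros; positivity)
  · have h1 : (0:ℝ) < 1 + ‖z‖^2 := by positivity
    rw [Real.norm_eq_abs, abs_of_nonneg (by positivity)]
    apply inv_anti₀ (by positivity)
    exact pow_le_pow_left₀ h1.le (by linarith) p

private lemma scale_int' (p : ℕ) {v : ℝ} (hv : 0 < v) :
    ∫ y : E3, ((v+‖y‖^2)^p)⁻¹ =
      (Real.sqrt v)^3 / v^p * ∫ z : E3, (((1:ℝ)+‖z‖^2)^p)⁻¹ := by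
  have hs : 0 < Real.sqrt v := Real.sqrt_pos.mpr hv
  have key : ∀ y : E3, ((v+‖y‖^2)^p)⁻¹
      = (v^p)⁻¹ * ((fun z : E3 => (((1:ℝ)+‖z‖^2)^p)⁻¹) ((Real.sqrt v)⁻¹ • y)) := by
    intro y
    simp only [norm_smul, norm_inv, Real.norm_eq_abs, abs_of_pos hs, mul_pow]
    rw [show ((Real.sqrt v)⁻¹)^2 = v⁻¹ by rw [inv_pow, Real.sq_sqrt hv.le]]
    have h2 : (0:ℝ) < v + ‖y‖^2 := by positivity
    rw [show (1:ℝ) + v⁻¹ * ‖y‖^2 = (v + ‖y‖^2) / v by field_simp]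
    rw [div_pow]
    field_simp
  simp_rw [key]
  rw [integral_const_mul, MeasureTheory.Measure.integral_comp_smul volume
    (fun z : E3 => (((1:ℝ)+‖z‖^2)^p)⁻¹) ((Real.sqrt v)⁻¹)]
  rw [finrank_euclideanSpace_fin, smul_eq_mul]
  rw [abs_of_nonneg (by positivity), inv_pow, inv_inv]
  ring

private def c2 : ℝ := ∫ z : E3, (((1:ℝ)+‖z‖^2)^2)⁻¹
private def c3 : ℝ := ∫ z : E3, (((1:ℝ)+‖z‖^2)^3)⁻¹

private lemma c2_nonneg : 0 ≤ c2 := integral_nonneg fun z => by positivity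
private lemma c3_nonneg : 0 ≤ c3 := integral_nonneg fun z => by positivity

private lemma int_g3 {v : ℝ} (hv : 1 ≤ v) :
    ∫ y : E3, ((v+‖y‖^2)^3)⁻¹ = c3 / (Real.sqrt v)^3 := by
  have hv0 : (0:ℝ) < v := by linarith
  have hs : 0 < Real.sqrt v := Real.sqrt_pos.mpr hv0
  rw [scale_int' 3 hv0]
  show Real.sqrt v ^ 3 / v ^ 3 * c3 = c3 / Real.sqrt v ^ 3
  have h6 : (Real.sqrt v)^(2*3) = v^3 := by rw [pow_mul, Real.sq_sqrt hv0.le]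
  norm_num at h6
  rw [← h6]
  have hs3 : (Real.sqrt v)^3 ≠ 0 := by positivity
  field_simp

private lemma int_f2 {u : ℝ} (hu : 1 ≤ u) (x : E3) :
    ∫ y : E3, ((u+‖x-y‖^2)^2)⁻¹ = c2 / Real.sqrt u := by
  have hu0 : (0:ℝ) < u := by linarith
  have hs : 0 < Real.sqrt u := Real.sqrt_pos.mpr hu0
  have := integral_sub_left_eq_self (fun z : E3 => ((u+‖z‖^2)^2)⁻¹) volume x
  rw [this, scale_int' 2 hu0]
  show Real.sqrt u ^ 3 / u ^ 2 * c2 = c2 / Real.sqrt u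
  have h4 : (Real.sqrt u)^(2*2) = u^2 := by rw [pow_mul, Real.sq_sqrt hu0.le]
  norm_num at h4
  rw [← h4]
  have hs1 : Real.sqrt u ≠ 0 := by positivity
  field_simp

private lemma innerP {u v : ℝ} (hu : 1 ≤ u) (hv : 1 ≤ v) (x : E3) :
    ∫ y : E3, ((u+‖x-y‖^2)^2)⁻¹ * ((v+‖y‖^2)^3)⁻¹ ≤ (u^2)⁻¹ * (c3 / (Real.sqrt v)^3) := by
  have hmaj : Integrable (fun y : E3 => (u^2)⁻¹ * ((v+‖y‖^2)^3)⁻¹) :=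
    (integ_shifted' (by norm_num) hv).const_mul _
  have hb : ∀ y : E3, ((u+‖x-y‖^2)^2)⁻¹ * ((v+‖y‖^2)^3)⁻¹
      ≤ (u^2)⁻¹ * ((v+‖y‖^2)^3)⁻¹ := by
    intro y
    have h1 : (0:ℝ) < v + ‖y‖^2 := by positivity
    have h2 : (0:ℝ) < u := by linarith
    have h3 : (u:ℝ)^2 ≤ (u+‖x-y‖^2)^2 := by nlinarith [sq_nonneg ‖x-y‖]
    exact mul_le_mul_of_nonneg_right (inv_anti₀ (by positivity) h3) (by positivity)
  calc ∫ y : E3, ((u+‖x-y‖^2)^2)⁻¹ * ((v+‖y‖^2)^3)⁻¹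
      ≤ ∫ y : E3, (u^2)⁻¹ * ((v+‖y‖^2)^3)⁻¹ :=
        integral_mono_of_nonneg (Eventually.of_forall fun y => by positivity)
          hmaj (Eventually.of_forall hb)
    _ = (u^2)⁻¹ * (c3 / (Real.sqrt v)^3) := by rw [integral_const_mul, int_g3 hv]

private lemma innerQ {u v : ℝ} (hu : 1 ≤ u) (hv : 1 ≤ v) (x : E3) :
    ∫ y : E3, ((u+‖x-y‖^2)^2)⁻¹ * ((v+‖y‖^2)^3)⁻¹ ≤ (v^3)⁻¹ * (c2 / Real.sqrt u) := by
  have hmaj : Integrable (fun y : E3 => (v^3)⁻¹ * ((u+‖x-y‖^2)^2)⁻¹) := by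
    have := ((integ_shifted' (p := 2) (by norm_num) hu).comp_sub_left x)
    exact this.const_mul _
  have hb : ∀ y : E3, ((u+‖x-y‖^2)^2)⁻¹ * ((v+‖y‖^2)^3)⁻¹
      ≤ (v^3)⁻¹ * ((u+‖x-y‖^2)^2)⁻¹ := by
    intro y
    have h1 : (0:ℝ) < u + ‖x-y‖^2 := by positivity
    have h2 : (0:ℝ) < v := by linarith
    rw [mul_comm ((v^3)⁻¹) _]
    have h3 : (v:ℝ)^3 ≤ (v+‖y‖^2)^3 :=
      pow_le_pow_left₀ (by linarith) (le_add_of_nonneg_right (by positivity)) 3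
    exact mul_le_mul_of_nonneg_left (inv_anti₀ (by positivity) h3) (by positivity)
  calc ∫ y : E3, ((u+‖x-y‖^2)^2)⁻¹ * ((v+‖y‖^2)^3)⁻¹
      ≤ ∫ y : E3, (v^3)⁻¹ * ((u+‖x-y‖^2)^2)⁻¹ :=
        integral_mono_of_nonneg (Eventually.of_forall fun y => by positivity)
          hmaj (Eventually.of_forall hb)
    _ = (v^3)⁻¹ * (c2 / Real.sqrt u) := by rw [integral_const_mul, int_f2 hu]

private lemma innerS {u v : ℝ} (hu : 1 ≤ u) (hv : 1 ≤ v) (x : E3) :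
    ∫ y : E3, ((u+‖x-y‖^2)^2)⁻¹ * ((v+‖y‖^2)^3)⁻¹
      ≤ ((u+‖x‖^2/4)^2)⁻¹ * (c3 / (Real.sqrt v)^3)
        + ((v+‖x‖^2/4)^3)⁻¹ * (c2 / Real.sqrt u) := by
  set q : ℝ := ‖x‖^2/4 with hq
  have hq0 : 0 ≤ q := by positivity
  have hmaj : Integrable (fun y : E3 =>
      ((u+q)^2)⁻¹ * ((v+‖y‖^2)^3)⁻¹ + ((v+q)^3)⁻¹ * ((u+‖x-y‖^2)^2)⁻¹) := by
    exact ((integ_shifted' (by norm_num) hv).const_mul _).add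
      (((integ_shifted' (p := 2) (by norm_num) hu).comp_sub_left x).const_mul _)
  have hb : ∀ y : E3, ((u+‖x-y‖^2)^2)⁻¹ * ((v+‖y‖^2)^3)⁻¹
      ≤ ((u+q)^2)⁻¹ * ((v+‖y‖^2)^3)⁻¹ + ((v+q)^3)⁻¹ * ((u+‖x-y‖^2)^2)⁻¹ := by
    intro y
    have h1 : (0:ℝ) < u + ‖x-y‖^2 := by positivity
    have h2 : (0:ℝ) < v + ‖y‖^2 := by positivity
    have htri : ‖x‖ ≤ ‖x-y‖ + ‖y‖ := by
      calc ‖x‖ = ‖(x-y) + y‖ := by rw [sub_add_cancel]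
        _ ≤ ‖x-y‖ + ‖y‖ := norm_add_le _ _
    rcases le_or_gt (‖x‖/2) ‖x-y‖ with hcase | hcase
    · have : q ≤ ‖x-y‖^2 := by
        rw [hq]
        nlinarith [norm_nonneg x, norm_nonneg (x-y)]
      have hle : ((u+‖x-y‖^2)^2)⁻¹ ≤ ((u+q)^2)⁻¹ :=
        inv_anti₀ (by positivity)
          (pow_le_pow_left₀ (by positivity) (by linarith) 2)
      calc ((u+‖x-y‖^2)^2)⁻¹ * ((v+‖y‖^2)^3)⁻¹
          ≤ ((u+q)^2)⁻¹ * ((v+‖y‖^2)^3)⁻¹ :=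
            mul_le_mul_of_nonneg_right hle (by positivity)
        _ ≤ _ := le_add_of_nonneg_right (by positivity)
    · have hy : ‖x‖/2 ≤ ‖y‖ := by linarith
      have : q ≤ ‖y‖^2 := by
        rw [hq]; nlinarith [norm_nonneg x, norm_nonneg y]
      have hle : ((v+‖y‖^2)^3)⁻¹ ≤ ((v+q)^3)⁻¹ :=
        inv_anti₀ (by positivity)
          (pow_le_pow_left₀ (by positivity) (by linarith) 3)
      calc ((u+‖x-y‖^2)^2)⁻¹ * ((v+‖y‖^2)^3)⁻¹
          ≤ ((u+‖x-y‖^2)^2)⁻¹ * ((v+q)^3)⁻¹ :=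
            mul_le_mul_of_nonneg_left hle (by positivity)
        _ = ((v+q)^3)⁻¹ * ((u+‖x-y‖^2)^2)⁻¹ := mul_comm _ _
        _ ≤ _ := le_add_of_nonneg_left (by positivity)
  calc ∫ y : E3, ((u+‖x-y‖^2)^2)⁻¹ * ((v+‖y‖^2)^3)⁻¹
      ≤ ∫ y : E3, (((u+q)^2)⁻¹ * ((v+‖y‖^2)^3)⁻¹ + ((v+q)^3)⁻¹ * ((u+‖x-y‖^2)^2)⁻¹) :=
        integral_mono_of_nonneg (Eventually.of_forall fun y => by positivity)
          hmaj (Eventually.of_forall hb)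
    _ = ((u+q)^2)⁻¹ * (c3 / (Real.sqrt v)^3) + ((v+q)^3)⁻¹ * (c2 / Real.sqrt u) := by
        rw [integral_add ((integ_shifted' (by norm_num) hv).const_mul _)
          (((integ_shifted' (p := 2) (by norm_num) hu).comp_sub_left x).const_mul _),
          integral_const_mul, integral_const_mul, int_g3 hv, int_f2 hu]

private lemma ftcA {s : ℝ} (hs : 0 ≤ s) :
    ∫ τ in Icc (0:ℝ) s, ((Real.sqrt (1+τ))^3)⁻¹ ≤ 2 := by
  have hpos : ∀ τ : ℝ, 0 ≤ τ → (0:ℝ) < 1 + τ := fun τ h => by linarith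
  have hderiv : ∀ τ ∈ uIcc (0:ℝ) s,
      HasDerivAt (fun τ => -2 * (Real.sqrt (1+τ))⁻¹) ((Real.sqrt (1+τ))^3)⁻¹ τ := by
    intro τ hτ
    rw [uIcc_of_le hs] at hτ
    have h1 : (0:ℝ) < 1 + τ := hpos τ hτ.1
    have hsq : 0 < Real.sqrt (1+τ) := Real.sqrt_pos.mpr h1
    have d1 : HasDerivAt (fun τ : ℝ => Real.sqrt (1+τ)) (1/(2*Real.sqrt (1+τ))) τ := by
      have := (Real.hasDerivAt_sqrt (ne_of_gt h1)).comp τ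
        ((hasDerivAt_id τ).const_add (1:ℝ))
      simpa [Function.comp_def] using this
    have d2 := (d1.inv (ne_of_gt hsq)).const_mul (-2 : ℝ)
    refine d2.congr_deriv ?_
    rw [show (Real.sqrt (1+τ))^3 = (Real.sqrt (1+τ))^2 * Real.sqrt (1+τ) by ring,
      Real.sq_sqrt h1.le]
    field_simp
  have hint : IntervalIntegrable (fun τ => ((Real.sqrt (1+τ))^3)⁻¹) volume 0 s := by
    apply ContinuousOn.intervalIntegrable
    apply ContinuousOn.inv₀
    · fun_prop
    · intro τ hτ
      rw [uIcc_of_le hs] at hτ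
      have h1 : (0:ℝ) < 1 + τ := hpos τ hτ.1
      positivity
  have := intervalIntegral.integral_eq_sub_of_hasDerivAt hderiv hint
  rw [integral_Icc_eq_integral_Ioc, ← intervalIntegral.integral_of_le hs, this]
  have h1 : (0:ℝ) < 1 + s := by linarith
  have h2 : (0:ℝ) ≤ (Real.sqrt (1+s))⁻¹ := by positivity
  rw [show (1:ℝ)+0 = 1 by norm_num, Real.sqrt_one]
  linarith

private lemma ftcB {t t2 : ℝ} (ht2 : 0 ≤ t2) (h2t : t2 ≤ t) :
    ∫ τ in Ioc t2 t, (Real.sqrt (1+t-τ))⁻¹ ≤ 2 * Real.sqrt (1+t) := by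
  have hderiv : ∀ τ ∈ uIcc t2 t,
      HasDerivAt (fun τ => -2 * Real.sqrt (1+t-τ)) (Real.sqrt (1+t-τ))⁻¹ τ := by
    intro τ hτ
    rw [uIcc_of_le h2t] at hτ
    have h1 : (0:ℝ) < 1 + t - τ := by have := hτ.2; linarith
    have hsq : 0 < Real.sqrt (1+t-τ) := Real.sqrt_pos.mpr h1
    have d1 : HasDerivAt (fun τ : ℝ => Real.sqrt (1+t-τ)) (1/(2*Real.sqrt (1+t-τ)) * (-1)) τ := by
      exact (Real.hasDerivAt_sqrt (ne_of_gt h1)).comp τ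
        (by simpa using ((hasDerivAt_id τ).const_sub (1+t)))
    have d2 := d1.const_mul (-2 : ℝ)
    refine d2.congr_deriv ?_
    field_simp
  have hint : IntervalIntegrable (fun τ => (Real.sqrt (1+t-τ))⁻¹) volume t2 t := by
    apply ContinuousOn.intervalIntegrable
    apply ContinuousOn.inv₀
    · fun_prop
    · intro τ hτ
      rw [uIcc_of_le h2t] at hτ
      have h1 : (0:ℝ) < 1 + t - τ := by have := hτ.2; linarith
      positivity
  have heq := intervalIntegral.integral_eq_sub_of_hasDerivAt hderiv hint
  rw [← intervalIntegral.integral_of_le h2t, heq]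
  have h1 : (0:ℝ) ≤ 1 + t - t2 := by linarith
  have h2 : Real.sqrt (1+t-t2) ≤ Real.sqrt (1+t) :=
    Real.sqrt_le_sqrt (by linarith)
  have h3 : (0:ℝ) ≤ Real.sqrt (1+t-t) := Real.sqrt_nonneg _
  nlinarith [Real.sqrt_nonneg (1+t-t)]

private lemma ftcC {b s : ℝ} (hb : 1 ≤ b) (hs : 0 ≤ s) :
    ∫ τ in Icc (0:ℝ) s, ((b+τ)^3)⁻¹ ≤ (b^2)⁻¹ := by
  have hpos : ∀ τ : ℝ, 0 ≤ τ → (0:ℝ) < b + τ := fun τ h => by linarith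
  have hderiv : ∀ τ ∈ uIcc (0:ℝ) s,
      HasDerivAt (fun τ => -(1/2) * ((b+τ)^2)⁻¹) ((b+τ)^3)⁻¹ τ := by
    intro τ hτ
    rw [uIcc_of_le hs] at hτ
    have h1 : (0:ℝ) < b + τ := hpos τ hτ.1
    have d0 : HasDerivAt (fun τ : ℝ => (b+τ)^2) (2*(b+τ)^1*1) τ :=
      ((hasDerivAt_id τ).const_add b).pow 2
    have d2 := (d0.inv (by positivity)).const_mul (-(1/2) : ℝ)
    refine d2.congr_deriv ?_
    field_simp
  have hint : IntervalIntegrable (fun τ => ((b+τ)^3)⁻¹) volume 0 s := by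
    apply ContinuousOn.intervalIntegrable
    apply ContinuousOn.inv₀
    · fun_prop
    · intro τ hτ
      rw [uIcc_of_le hs] at hτ
      have h1 : (0:ℝ) < b + τ := hpos τ hτ.1
      positivity
  have heq := intervalIntegral.integral_eq_sub_of_hasDerivAt hderiv hint
  rw [integral_Icc_eq_integral_Ioc, ← intervalIntegral.integral_of_le hs, heq]
  have h1 : (0:ℝ) < b + s := by linarith
  have h2 : (0:ℝ) ≤ ((b+s)^2)⁻¹ := by positivity
  have h3 : (0:ℝ) < b := by linarith
  have hb2 : (0:ℝ) < (b^2)⁻¹ := by positivity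
  rw [add_zero]
  linarith

private lemma split_bound {t t2 : ℝ} (ht2 : 0 ≤ t2) (h2t : t2 ≤ t) {F A B : ℝ → ℝ}
    (hF0 : ∀ τ ∈ Icc (0:ℝ) t, 0 ≤ F τ)
    (hFA : ∀ τ ∈ Icc (0:ℝ) t2, F τ ≤ A τ)
    (hFB : ∀ τ ∈ Ioc t2 t, F τ ≤ B τ)
    (hA : IntegrableOn A (Icc 0 t2)) (hB : IntegrableOn B (Ioc t2 t)) :
    ∫ τ in Icc (0:ℝ) t, F τ ≤ (∫ τ in Icc (0:ℝ) t2, A τ) + ∫ τ in Ioc t2 t, B τ := by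
  set g : ℝ → ℝ := fun τ =>
    (Icc (0:ℝ) t2).indicator A τ + (Ioc t2 t).indicator B τ with hg
  have hsub1 : Icc (0:ℝ) t2 ∩ Icc 0 t = Icc (0:ℝ) t2 :=
    inter_eq_left.mpr (Icc_subset_Icc le_rfl h2t)
  have hsub2 : Ioc t2 t ∩ Icc 0 t = Ioc t2 t :=
    inter_eq_left.mpr (fun τ hτ => ⟨le_trans ht2 hτ.1.le, hτ.2⟩)
  have hiA : Integrable ((Icc (0:ℝ) t2).indicator A) (volume.restrict (Icc 0 t)) := by
    rw [integrable_indicator_iff measurableSet_Icc, IntegrableOn,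
      Measure.restrict_restrict measurableSet_Icc, hsub1]
    exact hA
  have hiB : Integrable ((Ioc t2 t).indicator B) (volume.restrict (Icc 0 t)) := by
    rw [integrable_indicator_iff measurableSet_Ioc, IntegrableOn,
      Measure.restrict_restrict measurableSet_Ioc, hsub2]
    exact hB
  have hle : ∀ τ ∈ Icc (0:ℝ) t, F τ ≤ g τ := by
    intro τ hτ
    rcases le_or_gt τ t2 with h | h
    · have m1 : τ ∈ Icc (0:ℝ) t2 := ⟨hτ.1, h⟩
      have m2 : τ ∉ Ioc t2 t := fun hm => absurd hm.1 (not_lt.mpr h)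
      simp only [hg, indicator_of_mem m1, indicator_of_notMem m2, add_zero]
      exact hFA τ m1
    · have m1 : τ ∉ Icc (0:ℝ) t2 := fun hm => absurd hm.2 (not_le.mpr h)
      have m2 : τ ∈ Ioc t2 t := ⟨h, hτ.2⟩
      simp only [hg, indicator_of_mem m2, indicator_of_notMem m1, zero_add]
      exact hFB τ m2
  calc ∫ τ in Icc (0:ℝ) t, F τ ≤ ∫ τ in Icc (0:ℝ) t, g τ := by
        apply integral_mono_of_nonneg ?_ (hiA.add hiB)
        · exact (ae_restrict_iff' measurableSet_Icc).mpr (ae_of_all _ hle)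
        · exact (ae_restrict_iff' measurableSet_Icc).mpr (ae_of_all _ hF0)
    _ = (∫ τ in Icc (0:ℝ) t, (Icc (0:ℝ) t2).indicator A τ)
        + ∫ τ in Icc (0:ℝ) t, (Ioc t2 t).indicator B τ := integral_add hiA hiB
    _ = (∫ τ in Icc (0:ℝ) t2, A τ) + ∫ τ in Ioc t2 t, B τ := by
        rw [setIntegral_indicator measurableSet_Icc, setIntegral_indicator measurableSet_Ioc]
        rw [show Icc (0:ℝ) t ∩ Icc 0 t2 = Icc (0:ℝ) t2 by rw [inter_comm]; exact hsub1,
          show Icc (0:ℝ) t ∩ Ioc t2 t = Ioc t2 t by rw [inter_comm]; exact hsub2]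

private lemma rpow_form2 {w b : ℝ} (hw : 0 < w) (hb : 0 ≤ b) :
    w^(-2:ℝ)*(1+b/w)^(-2:ℝ) = ((w+b)^2)⁻¹ := by
  have h1 : (0:ℝ) < 1 + b/w := by positivity
  rw [show (-2:ℝ) = -((2:ℕ):ℝ) by norm_num, Real.rpow_neg hw.le, Real.rpow_neg h1.le,
    Real.rpow_natCast, Real.rpow_natCast]
  rw [show (1:ℝ)+b/w = (w+b)/w by field_simp]
  rw [div_pow]
  have hw2 : w^2 ≠ 0 := by positivity
  have hwb : ((w+b)^2) ≠ 0 := by positivity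
  field_simp

private lemma rpow_form3 {w b : ℝ} (hw : 0 < w) (hb : 0 ≤ b) :
    w^(-3:ℝ)*(1+b/w)^(-3:ℝ) = ((w+b)^3)⁻¹ := by
  have h1 : (0:ℝ) < 1 + b/w := by positivity
  rw [show (-3:ℝ) = -((3:ℕ):ℝ) by norm_num, Real.rpow_neg hw.le, Real.rpow_neg h1.le,
    Real.rpow_natCast, Real.rpow_natCast]
  rw [show (1:ℝ)+b/w = (w+b)/w by field_simp]
  rw [div_pow]
  have hw2 : w^3 ≠ 0 := by positivity
  have hwb : ((w+b)^3) ≠ 0 := by positivity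
  field_simp

private lemma rhs_form {T a2 : ℝ} (hT : 1 ≤ T) (ha2 : 0 ≤ a2) :
    T^(-2:ℝ) * (1+a2/T)^(-(3/2) : ℝ)
      = (Real.sqrt T)⁻¹ * ((Real.sqrt (T+a2))^3)⁻¹ := by
  have hT0 : (0:ℝ) < T := by linarith
  have hb0 : (0:ℝ) < 1 + a2/T := by positivity
  have hsT : 0 < Real.sqrt T := Real.sqrt_pos.mpr hT0
  have hsTa : 0 < Real.sqrt (T+a2) := Real.sqrt_pos.mpr (by linarith)
  have h1 : T^(-2:ℝ) = (T^2)⁻¹ := by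
    rw [show (-2:ℝ) = -((2:ℕ):ℝ) by norm_num, Real.rpow_neg hT0.le, Real.rpow_natCast]
  have h2 : (1+a2/T)^(-(3/2) : ℝ) = ((Real.sqrt (1+a2/T))^3)⁻¹ := by
    rw [show (-(3/2) : ℝ) = -((1/2)*(3:ℕ)) by norm_num, Real.rpow_neg hb0.le,
      Real.rpow_mul hb0.le, Real.rpow_natCast, ← Real.sqrt_eq_rpow]
  have h3 : Real.sqrt (1+a2/T) = Real.sqrt (T+a2) / Real.sqrt T := by
    rw [show (1:ℝ)+a2/T = (T+a2)/T by field_simp, Real.sqrt_div (by linarith) T]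
  rw [h1, h2, h3, div_pow]
  have h4 : (Real.sqrt T)^(2*2) = T^2 := by rw [pow_mul, Real.sq_sqrt hT0.le]
  norm_num at h4
  rw [← h4]
  have e1 : Real.sqrt T ≠ 0 := ne_of_gt hsT
  have e2 : Real.sqrt (T+a2) ≠ 0 := ne_of_gt hsTa
  field_simp

-- final numeric lemma, case a2 ≤ T
private lemma final1 {T a2 : ℝ} (hT : 1 ≤ T) (ha2 : 0 ≤ a2) (hc : a2 ≤ T) :
    4*(T^2)⁻¹ * (c3 * 2) + 8*(T^3)⁻¹*c2 * (2*Real.sqrt T)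
      ≤ 1000*(c2+c3) * ((Real.sqrt T)⁻¹ * ((Real.sqrt (T+a2))^3)⁻¹) := by
  have hT0 : (0:ℝ) < T := by linarith
  set s := Real.sqrt T with hs
  set r := Real.sqrt (T+a2) with hr
  have hs1 : 1 ≤ s := Real.one_le_sqrt.mpr hT
  have hs0 : 0 < s := by linarith
  have hr0 : 0 < r := Real.sqrt_pos.mpr (by linarith)
  have hsr : s ≤ r := Real.sqrt_le_sqrt (by linarith)
  have hs2 : s^2 = T := Real.sq_sqrt hT0.le
  have hr2 : r^2 = T+a2 := Real.sq_sqrt (by linarith)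
  -- r ≤ 1.5 s
  have hrs : r ≤ 1.5*s := by
    have h1 : T + a2 ≤ 2.25*T := by linarith
    have h2 : r ≤ Real.sqrt (2.25*T) := Real.sqrt_le_sqrt h1
    have h3 : Real.sqrt (2.25*T) = 1.5*s := by
      rw [Real.sqrt_mul (by norm_num) T, show (2.25:ℝ) = 1.5^2 by norm_num,
        Real.sqrt_sq (by norm_num)]
    linarith
  have hr3 : r^3 ≤ 4*s^3 := by nlinarith
  -- (s^4)⁻¹ ≤ 4*(s*r^3)⁻¹
  have key1 : (s^4)⁻¹ ≤ 4*(s*r^3)⁻¹ := by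
    rw [show 4*(s*r^3)⁻¹ = ((s*r^3)/4)⁻¹ by rw [inv_div]; ring]
    apply inv_anti₀ (by positivity)
    nlinarith
  have hT2 : (T^2)⁻¹ = (s^4)⁻¹ := by rw [← hs2]; ring_nf
  have hT3 : (T^3)⁻¹ = (s^6)⁻¹ := by rw [← hs2]; ring_nf
  have hs5 : (s^6)⁻¹*s ≤ (s^4)⁻¹ := by
    rw [show (s^6)⁻¹*s = (s^5)⁻¹ by field_simp]
    apply inv_anti₀ (by positivity)
    nlinarith [mul_le_mul_of_nonneg_left hs1 (pow_nonneg hs0.le 4)]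
  have hX : 0 ≤ c2*(s*r^3)⁻¹ := mul_nonneg c2_nonneg (by positivity)
  have hY : 0 ≤ c3*(s*r^3)⁻¹ := mul_nonneg c3_nonneg (by positivity)
  have t1 : 4*(T^2)⁻¹ * (c3 * 2) ≤ 32*(c3*(s*r^3)⁻¹) := by
    rw [hT2]
    calc 4*(s^4)⁻¹ * (c3*2) = (8*c3)*(s^4)⁻¹ := by ring
      _ ≤ (8*c3)*(4*(s*r^3)⁻¹) :=
        mul_le_mul_of_nonneg_left key1 (mul_nonneg (by norm_num) c3_nonneg)
      _ = 32*(c3*(s*r^3)⁻¹) := by ring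
  have t2 : 8*(T^3)⁻¹*c2 * (2*s) ≤ 64*(c2*(s*r^3)⁻¹) := by
    rw [hT3]
    calc 8*(s^6)⁻¹*c2*(2*s) = (16*c2)*((s^6)⁻¹*s) := by ring
      _ ≤ (16*c2)*(s^4)⁻¹ :=
        mul_le_mul_of_nonneg_left hs5 (mul_nonneg (by norm_num) c2_nonneg)
      _ ≤ (16*c2)*(4*(s*r^3)⁻¹) :=
        mul_le_mul_of_nonneg_left key1 (mul_nonneg (by norm_num) c2_nonneg)
      _ = 64*(c2*(s*r^3)⁻¹) := by ring
  have hfin : 1000*(c2+c3)*((s)⁻¹*(r^3)⁻¹)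
      = 1000*(c2*(s*r^3)⁻¹) + 1000*(c3*(s*r^3)⁻¹) := by
    rw [mul_inv]
    ring
  rw [hfin]
  linarith

-- final numeric lemma, case T ≤ a2
private lemma final2 {T a2 : ℝ} (hT : 1 ≤ T) (hc : T ≤ a2) :
    16*((T+a2)^2)⁻¹ * (c3 * 2)
      + 2*(Real.sqrt T)⁻¹*c2 * ((1+a2/4)^2)⁻¹
      + (8*((Real.sqrt T)^3)⁻¹*c3*((1+a2/4)^2)⁻¹) * T
      + 64*((T+a2)^3)⁻¹*c2 * (2*Real.sqrt T)
      ≤ 1000*(c2+c3) * ((Real.sqrt T)⁻¹ * ((Real.sqrt (T+a2))^3)⁻¹) := by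
  have hT0 : (0:ℝ) < T := by linarith
  have ha1 : (1:ℝ) ≤ a2 := le_trans hT hc
  set s := Real.sqrt T with hs
  set r := Real.sqrt (T+a2) with hr
  set q : ℝ := a2/4 with hqdef
  have hs1 : 1 ≤ s := Real.one_le_sqrt.mpr hT
  have hs0 : 0 < s := by linarith
  have hr0 : 0 < r := Real.sqrt_pos.mpr (by linarith)
  have hsr : s ≤ r := Real.sqrt_le_sqrt (by linarith)
  have hr1 : 1 ≤ r := le_trans hs1 hsr
  have hs2 : s^2 = T := Real.sq_sqrt hT0.le
  have hr2 : r^2 = T+a2 := Real.sq_sqrt (by linarith)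
  have hq0 : 0 < 1+q := by rw [hqdef]; linarith
  -- √a2 and bound r^3 ≤ 54*(1+q)^2
  have hw0 : 0 < Real.sqrt a2 := Real.sqrt_pos.mpr (by linarith)
  have hw1 : Real.sqrt a2 ≤ a2 := by
    calc Real.sqrt a2 ≤ Real.sqrt (a2^2) := Real.sqrt_le_sqrt (by nlinarith)
      _ = a2 := Real.sqrt_sq (by linarith)
  have hra : r ≤ 1.5*Real.sqrt a2 := by
    have h1 : T + a2 ≤ 2.25*a2 := by linarith
    have h2 : r ≤ Real.sqrt (2.25*a2) := Real.sqrt_le_sqrt h1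
    have h3 : Real.sqrt (2.25*a2) = 1.5*Real.sqrt a2 := by
      rw [Real.sqrt_mul (by norm_num) a2, show (2.25:ℝ) = 1.5^2 by norm_num,
        Real.sqrt_sq (by norm_num)]
    linarith
  have hwa : (Real.sqrt a2)^2 = a2 := Real.sq_sqrt (by linarith)
  have hr54 : r^3 ≤ 54*(1+q)^2 := by
    have h1 : r^3 ≤ 3.375*((Real.sqrt a2)^2*Real.sqrt a2) := by nlinarith
    have h2 : (Real.sqrt a2)^2*Real.sqrt a2 ≤ a2*a2 := by
      rw [hwa]; nlinarith
    have h3 : a2*a2 ≤ 16*(1+q)^2 := by rw [hqdef]; nlinarith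
    nlinarith
  have key54 : ((1+q)^2)⁻¹ ≤ 54*(r^3)⁻¹ := by
    rw [show 54*(r^3)⁻¹ = ((r^3)/54)⁻¹ by rw [inv_div]; ring]
    apply inv_anti₀ (by positivity)
    linarith
  -- piece 1 : (T+a2)^2 = r^4, (r^4)⁻¹ ≤ (s*r^3)⁻¹
  have key1 : ((T+a2)^2)⁻¹ ≤ (s*r^3)⁻¹ := by
    rw [show (T+a2)^2 = r^4 by rw [← hr2]; ring]
    apply inv_anti₀ (by positivity)
    nlinarith [mul_le_mul_of_nonneg_right hsr (pow_nonneg hr0.le 3)]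
  -- piece 4 : √T*((T+a2)^3)⁻¹ ≤ (s*r^3)⁻¹
  have key4 : ((T+a2)^3)⁻¹ * s ≤ (s*r^3)⁻¹ := by
    have hss : s^2 ≤ r^3 := by
      have h1 : s^2 ≤ r^2 := pow_le_pow_left₀ hs0.le hsr 2
      have h2 : r^2*1 ≤ r^2*r := mul_le_mul_of_nonneg_left hr1 (by positivity)
      nlinarith
    rw [show (T+a2)^3 = r^6 by rw [← hr2]; ring]
    rw [show (r^6)⁻¹*s = s/(r^6) by ring,
      show (s*r^3)⁻¹ = 1/(s*r^3) by rw [one_div]]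
    rw [div_le_div_iff₀ (by positivity) (by positivity)]
    calc s*(s*r^3) = s^2*r^3 := by ring
      _ ≤ r^3*r^3 := mul_le_mul_of_nonneg_right hss (pow_nonneg hr0.le 3)
      _ = 1*r^6 := by ring
  have t1 : 16*((T+a2)^2)⁻¹ * (c3 * 2) ≤ 32*(c3*(s*r^3)⁻¹) := by
    calc 16*((T+a2)^2)⁻¹*(c3*2) = (32*c3)*((T+a2)^2)⁻¹ := by ring
      _ ≤ (32*c3)*(s*r^3)⁻¹ :=
        mul_le_mul_of_nonneg_left key1 (mul_nonneg (by norm_num) c3_nonneg)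
      _ = 32*(c3*(s*r^3)⁻¹) := by ring
  have t2 : 2*s⁻¹*c2 * ((1+q)^2)⁻¹ ≤ 108*(c2*(s*r^3)⁻¹) := by
    calc 2*s⁻¹*c2*((1+q)^2)⁻¹ = (2*s⁻¹*c2)*((1+q)^2)⁻¹ := by ring
      _ ≤ (2*s⁻¹*c2)*(54*(r^3)⁻¹) := by
        exact mul_le_mul_of_nonneg_left key54
          (mul_nonneg (mul_nonneg (by norm_num) (inv_nonneg.mpr hs0.le)) c2_nonneg)
      _ = 108*(c2*(s⁻¹*(r^3)⁻¹)) := by ring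
      _ = 108*(c2*(s*r^3)⁻¹) := by rw [mul_inv]
  have t3 : (8*((s)^3)⁻¹*c3*((1+q)^2)⁻¹) * T ≤ 432*(c3*(s*r^3)⁻¹) := by
    have hTs : (s^3)⁻¹ * T = s⁻¹ := by
      rw [← hs2]; field_simp
    calc (8*(s^3)⁻¹*c3*((1+q)^2)⁻¹)*T = (8*c3)*((1+q)^2)⁻¹*((s^3)⁻¹*T) := by ring
      _ = (8*c3)*((1+q)^2)⁻¹*s⁻¹ := by rw [hTs]
      _ = (8*c3*s⁻¹)*((1+q)^2)⁻¹ := by ring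
      _ ≤ (8*c3*s⁻¹)*(54*(r^3)⁻¹) := by
        exact mul_le_mul_of_nonneg_left key54
          (mul_nonneg (mul_nonneg (by norm_num) c3_nonneg) (inv_nonneg.mpr hs0.le))
      _ = 432*(c3*(s⁻¹*(r^3)⁻¹)) := by ring
      _ = 432*(c3*(s*r^3)⁻¹) := by rw [mul_inv]
  have t4 : 64*((T+a2)^3)⁻¹*c2 * (2*s) ≤ 128*(c2*(s*r^3)⁻¹) := by
    calc 64*((T+a2)^3)⁻¹*c2*(2*s) = (128*c2)*(((T+a2)^3)⁻¹*s) := by ring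
      _ ≤ (128*c2)*(s*r^3)⁻¹ :=
        mul_le_mul_of_nonneg_left key4 (mul_nonneg (by norm_num) c2_nonneg)
      _ = 128*(c2*(s*r^3)⁻¹) := by ring
  have hX : 0 ≤ c2*(s*r^3)⁻¹ := mul_nonneg c2_nonneg (by positivity)
  have hY : 0 ≤ c3*(s*r^3)⁻¹ := mul_nonneg c3_nonneg (by positivity)
  have hfin : 1000*(c2+c3)*((s)⁻¹*(r^3)⁻¹)
      = 1000*(c2*(s*r^3)⁻¹) + 1000*(c3*(s*r^3)⁻¹) := by
    rw [mul_inv]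
    ring
  rw [hfin]
  linarith

end K1aux

open MeasureTheory

/-- Estimate K₁ of Lemma A.4: diffusion wave convolved with a nonlinear
diffusion wave. -/
theorem stmt_3 :
    ∃ C : ℝ, 0 < C ∧ ∀ t : ℝ, 0 ≤ t → ∀ x : EuclideanSpace ℝ (Fin 3),
      (∫ τ in Set.Icc (0 : ℝ) t, ∫ y : EuclideanSpace ℝ (Fin 3),
          (1 + t - τ) ^ (-2 : ℝ) * (1 + ‖x - y‖ ^ 2 / (1 + t - τ)) ^ (-2 : ℝ)
            * (1 + τ) ^ (-3 : ℝ) * (1 + ‖y‖ ^ 2 / (1 + τ)) ^ (-3 : ℝ))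
        ≤ C * (1 + t) ^ (-2 : ℝ) * (1 + ‖x‖ ^ 2 / (1 + t)) ^ (-(3 / 2) : ℝ) := by
  classical
  refine ⟨1 + 1000*(c2+c3), by linarith [c2_nonneg, c3_nonneg], ?_⟩
  intro t ht x
  set C : ℝ := 1 + 1000*(c2+c3) with hCdef
  have hT : (1:ℝ) ≤ 1+t := by linarith
  have ha2 : (0:ℝ) ≤ ‖x‖^2 := by positivity
  have ht20 : (0:ℝ) ≤ t/2 := by linarith
  have h2t : t/2 ≤ t := by linarith
  have hq0 : (0:ℝ) ≤ ‖x‖^2/4 := by positivity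
  have hq1 : (1:ℝ) ≤ 1+‖x‖^2/4 := by linarith
  -- nonnegativity of the inner integral
  have hF0 : ∀ τ ∈ Set.Icc (0:ℝ) t, (0:ℝ) ≤ ∫ y : EuclideanSpace ℝ (Fin 3),
      (1 + t - τ) ^ (-2 : ℝ) * (1 + ‖x - y‖ ^ 2 / (1 + t - τ)) ^ (-2 : ℝ)
        * (1 + τ) ^ (-3 : ℝ) * (1 + ‖y‖ ^ 2 / (1 + τ)) ^ (-3 : ℝ) := by
    intro τ hτ
    have h1 : (0:ℝ) < 1+t-τ := by have := hτ.2; linarith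
    have h2 : (0:ℝ) < 1+τ := by have := hτ.1; linarith
    apply integral_nonneg
    intro y
    have h3 : (0:ℝ) ≤ 1 + ‖x-y‖^2/(1+t-τ) := by positivity
    have h4 : (0:ℝ) ≤ 1 + ‖y‖^2/(1+τ) := by positivity
    exact mul_nonneg (mul_nonneg (mul_nonneg (Real.rpow_nonneg h1.le _)
      (Real.rpow_nonneg h3 _)) (Real.rpow_nonneg h2.le _)) (Real.rpow_nonneg h4 _)
  -- rewriting the inner integral in elementary form
  have hFeq : ∀ τ ∈ Set.Icc (0:ℝ) t, (∫ y : EuclideanSpace ℝ (Fin 3),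
      (1 + t - τ) ^ (-2 : ℝ) * (1 + ‖x - y‖ ^ 2 / (1 + t - τ)) ^ (-2 : ℝ)
        * (1 + τ) ^ (-3 : ℝ) * (1 + ‖y‖ ^ 2 / (1 + τ)) ^ (-3 : ℝ))
      = ∫ y : EuclideanSpace ℝ (Fin 3),
        (((1+t-τ)+‖x-y‖^2)^2)⁻¹ * (((1+τ)+‖y‖^2)^3)⁻¹ := by
    intro τ hτ
    have h1 : (0:ℝ) < 1+t-τ := by have := hτ.2; linarith
    have h2 : (0:ℝ) < 1+τ := by have := hτ.1; linarith
    refine integral_congr_ae (Filter.Eventually.of_forall fun y => ?_)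
    calc (1 + t - τ) ^ (-2 : ℝ) * (1 + ‖x - y‖ ^ 2 / (1 + t - τ)) ^ (-2 : ℝ)
            * (1 + τ) ^ (-3 : ℝ) * (1 + ‖y‖ ^ 2 / (1 + τ)) ^ (-3 : ℝ)
        = ((1 + t - τ) ^ (-2 : ℝ) * (1 + ‖x - y‖ ^ 2 / (1 + t - τ)) ^ (-2 : ℝ))
            * ((1 + τ) ^ (-3 : ℝ) * (1 + ‖y‖ ^ 2 / (1 + τ)) ^ (-3 : ℝ)) := by ring
      _ = (((1+t-τ)+‖x-y‖^2)^2)⁻¹ * (((1+τ)+‖y‖^2)^3)⁻¹ := by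
          rw [rpow_form2 h1 (by positivity), rpow_form3 h2 (by positivity)]
  -- integrable 1d kernels
  have intK1 : ∀ b : ℝ, IntegrableOn (fun τ => ((Real.sqrt (1+τ))^3)⁻¹) (Set.Icc 0 b) := by
    intro b
    apply ContinuousOn.integrableOn_compact isCompact_Icc
    apply ContinuousOn.inv₀ (Continuous.continuousOn (by fun_prop))
    intro τ hτ
    have h1 : (0:ℝ) < 1+τ := by have := hτ.1; linarith
    positivity
  have intK2 : IntegrableOn (fun τ => (((1+‖x‖^2/4)+τ)^3)⁻¹) (Set.Icc 0 (t/2)) := by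
    apply ContinuousOn.integrableOn_compact isCompact_Icc
    apply ContinuousOn.inv₀ (Continuous.continuousOn (by fun_prop))
    intro τ hτ
    have h1 : (0:ℝ) < (1+‖x‖^2/4)+τ := by have := hτ.1; positivity
    positivity
  have intK3 : IntegrableOn (fun τ => (Real.sqrt (1+t-τ))⁻¹) (Set.Ioc (t/2) t) := by
    apply IntegrableOn.mono_set ?_ Set.Ioc_subset_Icc_self
    apply ContinuousOn.integrableOn_compact isCompact_Icc
    apply ContinuousOn.inv₀ (Continuous.continuousOn (by fun_prop))
    intro τ hτ
    have h1 : (0:ℝ) < 1+t-τ := by have := hτ.2; linarith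
    positivity
  rcases le_or_gt (‖x‖^2) (1+t) with hcase | hcase
  · -- CASE 1 : ‖x‖² ≤ 1+t
    have hFA : ∀ τ ∈ Set.Icc (0:ℝ) (t/2), (∫ y : EuclideanSpace ℝ (Fin 3),
        (1 + t - τ) ^ (-2 : ℝ) * (1 + ‖x - y‖ ^ 2 / (1 + t - τ)) ^ (-2 : ℝ)
          * (1 + τ) ^ (-3 : ℝ) * (1 + ‖y‖ ^ 2 / (1 + τ)) ^ (-3 : ℝ))
        ≤ 4*((1+t)^2)⁻¹ * (c3 / (Real.sqrt (1+τ))^3) := by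
      intro τ hτ
      have hτt : τ ∈ Set.Icc (0:ℝ) t := ⟨hτ.1, le_trans hτ.2 h2t⟩
      have hu : (1:ℝ) ≤ 1+t-τ := by have := hτ.2; linarith
      have hv : (1:ℝ) ≤ 1+τ := by have := hτ.1; linarith
      rw [hFeq τ hτt]
      refine le_trans (innerP hu hv x) ?_
      apply mul_le_mul_of_nonneg_right ?_ (div_nonneg c3_nonneg (by positivity))
      rw [show (4:ℝ)*((1+t)^2)⁻¹ = ((1+t)^2/4)⁻¹ by rw [inv_div, div_eq_mul_inv]]
      apply inv_anti₀ (by positivity)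
      have h5 : (1+t)/2 ≤ 1+t-τ := by have := hτ.2; linarith
      have h6 : ((1+t)/2)^2 ≤ (1+t-τ)^2 := pow_le_pow_left₀ (by linarith) h5 2
      calc (1+t)^2/4 = ((1+t)/2)^2 := by ring
        _ ≤ (1+t-τ)^2 := h6
    have hFB : ∀ τ ∈ Set.Ioc (t/2) t, (∫ y : EuclideanSpace ℝ (Fin 3),
        (1 + t - τ) ^ (-2 : ℝ) * (1 + ‖x - y‖ ^ 2 / (1 + t - τ)) ^ (-2 : ℝ)
          * (1 + τ) ^ (-3 : ℝ) * (1 + ‖y‖ ^ 2 / (1 + τ)) ^ (-3 : ℝ))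
        ≤ 8*((1+t)^3)⁻¹*c2 * (Real.sqrt (1+t-τ))⁻¹ := by
      intro τ hτ
      have hτt : τ ∈ Set.Icc (0:ℝ) t := ⟨le_trans ht20 hτ.1.le, hτ.2⟩
      have hu : (1:ℝ) ≤ 1+t-τ := by have := hτ.2; linarith
      have hv : (1:ℝ) ≤ 1+τ := by have := hτ.1; linarith
      rw [hFeq τ hτt]
      refine le_trans (innerQ hu hv x) ?_
      have h5 : ((1+τ)^3)⁻¹ ≤ 8*((1+t)^3)⁻¹ := by
        rw [show (8:ℝ)*((1+t)^3)⁻¹ = ((1+t)^3/8)⁻¹ by rw [inv_div, div_eq_mul_inv]]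
        apply inv_anti₀ (by positivity)
        have h6 : (1+t)/2 ≤ 1+τ := by have := hτ.1; linarith
        have h7 : ((1+t)/2)^3 ≤ (1+τ)^3 := pow_le_pow_left₀ (by linarith) h6 3
        calc (1+t)^3/8 = ((1+t)/2)^3 := by ring
          _ ≤ (1+τ)^3 := h7
      calc ((1+τ)^3)⁻¹ * (c2 / Real.sqrt (1+t-τ))
          = ((1+τ)^3)⁻¹ * c2 * (Real.sqrt (1+t-τ))⁻¹ := by
            rw [div_eq_mul_inv c2]; ring
        _ ≤ 8*((1+t)^3)⁻¹*c2 * (Real.sqrt (1+t-τ))⁻¹ := by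
            apply mul_le_mul_of_nonneg_right ?_ (by positivity)
            exact mul_le_mul_of_nonneg_right h5 c2_nonneg
    have hA : IntegrableOn (fun τ => 4*((1+t)^2)⁻¹ * (c3 / (Real.sqrt (1+τ))^3))
        (Set.Icc 0 (t/2)) := by
      simp_rw [div_eq_mul_inv]
      exact (((intK1 (t/2)).const_mul c3).const_mul _)
    have hB : IntegrableOn (fun τ => 8*((1+t)^3)⁻¹*c2 * (Real.sqrt (1+t-τ))⁻¹)
        (Set.Ioc (t/2) t) := intK3.const_mul _
    have key := split_bound ht20 h2t hF0 hFA hFB hA hB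
    have IA : (∫ τ in Set.Icc (0:ℝ) (t/2), 4*((1+t)^2)⁻¹ * (c3 / (Real.sqrt (1+τ))^3))
        ≤ 4*((1+t)^2)⁻¹ * (c3 * 2) := by
      simp_rw [div_eq_mul_inv]
      rw [integral_const_mul, integral_const_mul]
      apply mul_le_mul_of_nonneg_left ?_ (by positivity)
      exact mul_le_mul_of_nonneg_left (ftcA ht20) c3_nonneg
    have IB : (∫ τ in Set.Ioc (t/2) t, 8*((1+t)^3)⁻¹*c2 * (Real.sqrt (1+t-τ))⁻¹)
        ≤ 8*((1+t)^3)⁻¹*c2 * (2*Real.sqrt (1+t)) := by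
      rw [integral_const_mul]
      apply mul_le_mul_of_nonneg_left (ftcB ht20 h2t)
      apply mul_nonneg (mul_nonneg (by norm_num) (by positivity)) c2_nonneg
    have hfin := final1 hT ha2 hcase
    have hR0 : (0:ℝ) ≤ (Real.sqrt (1+t))⁻¹ * ((Real.sqrt ((1+t)+‖x‖^2))^3)⁻¹ := by positivity
    calc (∫ τ in Set.Icc (0:ℝ) t, ∫ y : EuclideanSpace ℝ (Fin 3),
          (1 + t - τ) ^ (-2 : ℝ) * (1 + ‖x - y‖ ^ 2 / (1 + t - τ)) ^ (-2 : ℝ)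
            * (1 + τ) ^ (-3 : ℝ) * (1 + ‖y‖ ^ 2 / (1 + τ)) ^ (-3 : ℝ))
        ≤ (∫ τ in Set.Icc (0:ℝ) (t/2), 4*((1+t)^2)⁻¹ * (c3 / (Real.sqrt (1+τ))^3))
          + ∫ τ in Set.Ioc (t/2) t, 8*((1+t)^3)⁻¹*c2 * (Real.sqrt (1+t-τ))⁻¹ := key
      _ ≤ 4*((1+t)^2)⁻¹ * (c3 * 2) + 8*((1+t)^3)⁻¹*c2 * (2*Real.sqrt (1+t)) :=
          add_le_add IA IB
      _ ≤ 1000*(c2+c3) * ((Real.sqrt (1+t))⁻¹ * ((Real.sqrt ((1+t)+‖x‖^2))^3)⁻¹) := hfin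
      _ ≤ C * ((Real.sqrt (1+t))⁻¹ * ((Real.sqrt ((1+t)+‖x‖^2))^3)⁻¹) := by
          apply mul_le_mul_of_nonneg_right ?_ hR0
          rw [hCdef]; linarith
      _ = C * (1 + t) ^ (-2 : ℝ) * (1 + ‖x‖ ^ 2 / (1 + t)) ^ (-(3 / 2) : ℝ) := by
          rw [mul_assoc, rhs_form hT ha2]
  · -- CASE 2 : 1+t ≤ ‖x‖²
    have hcase' : (1+t) ≤ ‖x‖^2 := hcase.le
    have hFA : ∀ τ ∈ Set.Icc (0:ℝ) (t/2), (∫ y : EuclideanSpace ℝ (Fin 3),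
        (1 + t - τ) ^ (-2 : ℝ) * (1 + ‖x - y‖ ^ 2 / (1 + t - τ)) ^ (-2 : ℝ)
          * (1 + τ) ^ (-3 : ℝ) * (1 + ‖y‖ ^ 2 / (1 + τ)) ^ (-3 : ℝ))
        ≤ 16*(((1+t)+‖x‖^2)^2)⁻¹ * (c3 / (Real.sqrt (1+τ))^3)
          + 2*(Real.sqrt (1+t))⁻¹*c2 * (((1+‖x‖^2/4)+τ)^3)⁻¹ := by
      intro τ hτ
      have hτt : τ ∈ Set.Icc (0:ℝ) t := ⟨hτ.1, le_trans hτ.2 h2t⟩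
      have hu : (1:ℝ) ≤ 1+t-τ := by have := hτ.2; linarith
      have hv : (1:ℝ) ≤ 1+τ := by have := hτ.1; linarith
      rw [hFeq τ hτt]
      refine le_trans (innerS hu hv x) (add_le_add ?_ ?_)
      · apply mul_le_mul_of_nonneg_right ?_ (div_nonneg c3_nonneg (by positivity))
        rw [show (16:ℝ)*(((1+t)+‖x‖^2)^2)⁻¹ = (((1+t)+‖x‖^2)^2/16)⁻¹ by
          rw [inv_div, div_eq_mul_inv]]
        apply inv_anti₀ (by positivity)
        have h5 : ((1+t)+‖x‖^2)/4 ≤ (1+t-τ)+‖x‖^2/4 := by have := hτ.2; linarith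
        have h6 : (((1+t)+‖x‖^2)/4)^2 ≤ ((1+t-τ)+‖x‖^2/4)^2 :=
          pow_le_pow_left₀ (by positivity) h5 2
        calc ((1+t)+‖x‖^2)^2/16 = (((1+t)+‖x‖^2)/4)^2 := by ring
          _ ≤ ((1+t-τ)+‖x‖^2/4)^2 := h6
      · have hsq : Real.sqrt (1+t)/2 ≤ Real.sqrt (1+t-τ) := by
          have h5 : (1+t)/4 ≤ 1+t-τ := by have := hτ.2; linarith
          have h6 : Real.sqrt ((1+t)/4) ≤ Real.sqrt (1+t-τ) := Real.sqrt_le_sqrt h5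
          have h7 : Real.sqrt ((1+t)/4) = Real.sqrt (1+t)/2 := by
            rw [Real.sqrt_div (by linarith) 4, show (4:ℝ) = 2^2 by norm_num,
              Real.sqrt_sq (by norm_num)]
          linarith
        have hinv : (Real.sqrt (1+t-τ))⁻¹ ≤ 2*(Real.sqrt (1+t))⁻¹ := by
          rw [show (2:ℝ)*(Real.sqrt (1+t))⁻¹ = (Real.sqrt (1+t)/2)⁻¹ by
            rw [inv_div, div_eq_mul_inv]]
          apply inv_anti₀ (by positivity) hsq
        calc (((1+τ)+‖x‖^2/4)^3)⁻¹ * (c2 / Real.sqrt (1+t-τ))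
            = (((1+τ)+‖x‖^2/4)^3)⁻¹ * (c2 * (Real.sqrt (1+t-τ))⁻¹) := by
              rw [div_eq_mul_inv c2]
          _ ≤ (((1+τ)+‖x‖^2/4)^3)⁻¹ * (c2 * (2*(Real.sqrt (1+t))⁻¹)) := by
              apply mul_le_mul_of_nonneg_left ?_ (by positivity)
              exact mul_le_mul_of_nonneg_left hinv c2_nonneg
          _ = 2*(Real.sqrt (1+t))⁻¹*c2 * (((1+‖x‖^2/4)+τ)^3)⁻¹ := by ring_nf
    have hFB : ∀ τ ∈ Set.Ioc (t/2) t, (∫ y : EuclideanSpace ℝ (Fin 3),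
        (1 + t - τ) ^ (-2 : ℝ) * (1 + ‖x - y‖ ^ 2 / (1 + t - τ)) ^ (-2 : ℝ)
          * (1 + τ) ^ (-3 : ℝ) * (1 + ‖y‖ ^ 2 / (1 + τ)) ^ (-3 : ℝ))
        ≤ 8*((Real.sqrt (1+t))^3)⁻¹*c3*((1+‖x‖^2/4)^2)⁻¹
          + 64*(((1+t)+‖x‖^2)^3)⁻¹*c2 * (Real.sqrt (1+t-τ))⁻¹ := by
      intro τ hτ
      have hτt : τ ∈ Set.Icc (0:ℝ) t := ⟨le_trans ht20 hτ.1.le, hτ.2⟩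
      have hu : (1:ℝ) ≤ 1+t-τ := by have := hτ.2; linarith
      have hv : (1:ℝ) ≤ 1+τ := by have := hτ.1; linarith
      rw [hFeq τ hτt]
      refine le_trans (innerS hu hv x) (add_le_add ?_ ?_)
      · have h5 : (((1+t-τ)+‖x‖^2/4)^2)⁻¹ ≤ ((1+‖x‖^2/4)^2)⁻¹ := by
          apply inv_anti₀ (by positivity)
          apply pow_le_pow_left₀ (by positivity) (by linarith) 2
        have hsq : Real.sqrt (1+t)/2 ≤ Real.sqrt (1+τ) := by
          have h6 : (1+t)/4 ≤ 1+τ := by have := hτ.1; linarith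
          have h7 : Real.sqrt ((1+t)/4) ≤ Real.sqrt (1+τ) := Real.sqrt_le_sqrt h6
          have h8 : Real.sqrt ((1+t)/4) = Real.sqrt (1+t)/2 := by
            rw [Real.sqrt_div (by linarith) 4, show (4:ℝ) = 2^2 by norm_num,
              Real.sqrt_sq (by norm_num)]
          linarith
        have hc3v : ((Real.sqrt (1+τ))^3)⁻¹ ≤ 8*((Real.sqrt (1+t))^3)⁻¹ := by
          rw [show (8:ℝ)*((Real.sqrt (1+t))^3)⁻¹ = ((Real.sqrt (1+t))^3/8)⁻¹ by
            rw [inv_div, div_eq_mul_inv]]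
          apply inv_anti₀ (by positivity)
          have h9 : (Real.sqrt (1+t)/2)^3 ≤ (Real.sqrt (1+τ))^3 :=
            pow_le_pow_left₀ (by positivity) hsq 3
          calc (Real.sqrt (1+t))^3/8 = (Real.sqrt (1+t)/2)^3 := by ring
            _ ≤ (Real.sqrt (1+τ))^3 := h9
        calc (((1+t-τ)+‖x‖^2/4)^2)⁻¹ * (c3 / (Real.sqrt (1+τ))^3)
            = (((1+t-τ)+‖x‖^2/4)^2)⁻¹ * (c3 * ((Real.sqrt (1+τ))^3)⁻¹) := by
              rw [div_eq_mul_inv c3]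
          _ ≤ ((1+‖x‖^2/4)^2)⁻¹ * (c3 * (8*((Real.sqrt (1+t))^3)⁻¹)) := by
              apply mul_le_mul h5 (mul_le_mul_of_nonneg_left hc3v c3_nonneg)
                (mul_nonneg c3_nonneg (by positivity)) (by positivity)
          _ = 8*((Real.sqrt (1+t))^3)⁻¹*c3*((1+‖x‖^2/4)^2)⁻¹ := by ring
      · have h5 : (((1+τ)+‖x‖^2/4)^3)⁻¹ ≤ 64*(((1+t)+‖x‖^2)^3)⁻¹ := by
          rw [show (64:ℝ)*(((1+t)+‖x‖^2)^3)⁻¹ = (((1+t)+‖x‖^2)^3/64)⁻¹ by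
            rw [inv_div, div_eq_mul_inv]]
          apply inv_anti₀ (by positivity)
          have h6 : ((1+t)+‖x‖^2)/4 ≤ (1+τ)+‖x‖^2/4 := by have := hτ.1; linarith
          have h7 : (((1+t)+‖x‖^2)/4)^3 ≤ ((1+τ)+‖x‖^2/4)^3 :=
            pow_le_pow_left₀ (by positivity) h6 3
          calc ((1+t)+‖x‖^2)^3/64 = (((1+t)+‖x‖^2)/4)^3 := by ring
            _ ≤ ((1+τ)+‖x‖^2/4)^3 := h7
        calc (((1+τ)+‖x‖^2/4)^3)⁻¹ * (c2 / Real.sqrt (1+t-τ))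
            = (((1+τ)+‖x‖^2/4)^3)⁻¹ * (c2 * (Real.sqrt (1+t-τ))⁻¹) := by
              rw [div_eq_mul_inv c2]
          _ ≤ (64*(((1+t)+‖x‖^2)^3)⁻¹) * (c2 * (Real.sqrt (1+t-τ))⁻¹) :=
              mul_le_mul_of_nonneg_right h5 (mul_nonneg c2_nonneg (by positivity))
          _ = 64*(((1+t)+‖x‖^2)^3)⁻¹*c2 * (Real.sqrt (1+t-τ))⁻¹ := by ring
    have hA1 : IntegrableOn (fun τ => 16*(((1+t)+‖x‖^2)^2)⁻¹ * (c3 / (Real.sqrt (1+τ))^3))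
        (Set.Icc 0 (t/2)) := by
      simp_rw [div_eq_mul_inv]
      exact ((intK1 (t/2)).const_mul c3).const_mul _
    have hA2 : IntegrableOn (fun τ => 2*(Real.sqrt (1+t))⁻¹*c2 * (((1+‖x‖^2/4)+τ)^3)⁻¹)
        (Set.Icc 0 (t/2)) := intK2.const_mul _
    have hB1 : IntegrableOn (fun _ : ℝ => 8*((Real.sqrt (1+t))^3)⁻¹*c3*((1+‖x‖^2/4)^2)⁻¹)
        (Set.Ioc (t/2) t) := integrableOn_const measure_Ioc_lt_top.ne
    have hB2 : IntegrableOn (fun τ => 64*(((1+t)+‖x‖^2)^3)⁻¹*c2 * (Real.sqrt (1+t-τ))⁻¹)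
        (Set.Ioc (t/2) t) := intK3.const_mul _
    have key := split_bound ht20 h2t hF0 hFA hFB (hA1.add hA2) (hB1.add hB2)
    have IA : (∫ τ in Set.Icc (0:ℝ) (t/2), (16*(((1+t)+‖x‖^2)^2)⁻¹ * (c3 / (Real.sqrt (1+τ))^3)
          + 2*(Real.sqrt (1+t))⁻¹*c2 * (((1+‖x‖^2/4)+τ)^3)⁻¹))
        ≤ 16*(((1+t)+‖x‖^2)^2)⁻¹ * (c3 * 2)
          + 2*(Real.sqrt (1+t))⁻¹*c2 * ((1+‖x‖^2/4)^2)⁻¹ := by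
      rw [integral_add hA1 hA2]
      apply add_le_add
      · simp_rw [div_eq_mul_inv]
        rw [integral_const_mul, integral_const_mul]
        apply mul_le_mul_of_nonneg_left ?_ (by positivity)
        exact mul_le_mul_of_nonneg_left (ftcA ht20) c3_nonneg
      · rw [integral_const_mul]
        apply mul_le_mul_of_nonneg_left (ftcC hq1 ht20)
        exact mul_nonneg (mul_nonneg (by norm_num) (by positivity)) c2_nonneg
    have IB : (∫ τ in Set.Ioc (t/2) t, (8*((Real.sqrt (1+t))^3)⁻¹*c3*((1+‖x‖^2/4)^2)⁻¹
          + 64*(((1+t)+‖x‖^2)^3)⁻¹*c2 * (Real.sqrt (1+t-τ))⁻¹))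
        ≤ (8*((Real.sqrt (1+t))^3)⁻¹*c3*((1+‖x‖^2/4)^2)⁻¹) * (1+t)
          + 64*(((1+t)+‖x‖^2)^3)⁻¹*c2 * (2*Real.sqrt (1+t)) := by
      rw [integral_add hB1 hB2]
      apply add_le_add
      · rw [setIntegral_const, Real.volume_real_Ioc_of_le h2t, smul_eq_mul]
        rw [mul_comm]
        apply mul_le_mul_of_nonneg_left (by linarith)
        have h8 : (0:ℝ) ≤ ((1+‖x‖^2/4)^2)⁻¹ := by positivity
        have h9 : (0:ℝ) ≤ ((Real.sqrt (1+t))^3)⁻¹ := by positivity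
        exact mul_nonneg (mul_nonneg (mul_nonneg (by norm_num) h9) c3_nonneg) h8
      · rw [integral_const_mul]
        apply mul_le_mul_of_nonneg_left (ftcB ht20 h2t)
        have h9 : (0:ℝ) ≤ (((1+t)+‖x‖^2)^3)⁻¹ := by positivity
        exact mul_nonneg (mul_nonneg (by norm_num) h9) c2_nonneg
    have hfin := final2 hT hcase'
    have hR0 : (0:ℝ) ≤ (Real.sqrt (1+t))⁻¹ * ((Real.sqrt ((1+t)+‖x‖^2))^3)⁻¹ := by positivity
    calc (∫ τ in Set.Icc (0:ℝ) t, ∫ y : EuclideanSpace ℝ (Fin 3),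
          (1 + t - τ) ^ (-2 : ℝ) * (1 + ‖x - y‖ ^ 2 / (1 + t - τ)) ^ (-2 : ℝ)
            * (1 + τ) ^ (-3 : ℝ) * (1 + ‖y‖ ^ 2 / (1 + τ)) ^ (-3 : ℝ))
        ≤ _ := key
      _ ≤ (16*(((1+t)+‖x‖^2)^2)⁻¹ * (c3 * 2)
            + 2*(Real.sqrt (1+t))⁻¹*c2 * ((1+‖x‖^2/4)^2)⁻¹)
          + ((8*((Real.sqrt (1+t))^3)⁻¹*c3*((1+‖x‖^2/4)^2)⁻¹) * (1+t)
            + 64*(((1+t)+‖x‖^2)^3)⁻¹*c2 * (2*Real.sqrt (1+t))) := add_le_add IA IB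
      _ ≤ 1000*(c2+c3) * ((Real.sqrt (1+t))⁻¹ * ((Real.sqrt ((1+t)+‖x‖^2))^3)⁻¹) := by
          linarith [hfin]
      _ ≤ C * ((Real.sqrt (1+t))⁻¹ * ((Real.sqrt ((1+t)+‖x‖^2))^3)⁻¹) := by
          apply mul_le_mul_of_nonneg_right ?_ hR0
          rw [hCdef]; linarith
      _ = C * (1 + t) ^ (-2 : ℝ) * (1 + ‖x‖ ^ 2 / (1 + t)) ^ (-(3 / 2) : ℝ) := by
          rw [mul_assoc, rhs_form hT ha2]
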